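/- Combinatorial recursion for PBW bases (Lemma 4.7 shape): define sets of monomials B(k_1,…,k_N) in commuting variables f_0, f_1, f_2, … recursively by B() = {1} and B(k_1,…,k_N) = sh(B(k_1,…,k_{N−1})) ∪ f_0·B(k_1,…,k_N−1) for k_1 ≤ … ≤ k_N (where sh replaces each f_i by f_{i+1}, and B(k_1,…,k_{N−1},0) := B(k_1,…,k_{N−1}) after dropping the zero). Then for all k, N ≥ 1: B(k^N) = ⋃_{r=0}^{k} f_0^{Nr}·sh(B((k−r)^{N−1})) ∪ ⋃_{j=1}^{N−1} ⋃_{r=1}^{k} f_0^{Nr−j}·sh(B((k−r)^{N−j},(k−r+1)^{j−1})). -/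

import Mathlib

/-- Monomials in the free commutative monoid on generators `f_0, f_1, f_2, …` are
finitely supported exponent vectors `ℕ →₀ ℕ`; `f_i` is `Finsupp.single i 1` and the
monoid operation is addition of exponents. -/
noncomputable def shMon : (ℕ →₀ ℕ) → (ℕ →₀ ℕ) :=
  Finsupp.mapDomain (· + 1)

/-- Re-sort a list of natural numbers in nonincreasing order. -/
def sortDesc (l : List ℕ) : List ℕ :=
  l.insertionSort (fun a b => b ≤ a)

/-- Fuelled version of the recursion
`B() = {1}`, `B(k_1,…,k_N) = sh(B(k_1,…,k_{N−1})) ∪ f_0·B(sorted(k_1,…,k_N − 1))`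
(dropping zero entries), where a tuple `k_1 ≤ ⋯ ≤ k_N` is represented by the
*nonincreasing* list `[k_N, …, k_1]`.  The fuel `l.sum + l.length` always suffices. -/
noncomputable def BsetAux : ℕ → List ℕ → Set (ℕ →₀ ℕ)
  | 0, _ => {0}
  | _ + 1, [] => {0}
  | fuel + 1, 0 :: ks => BsetAux fuel ks
  | fuel + 1, (k + 1) :: ks =>
      shMon '' BsetAux fuel ks ∪
        (fun v => Finsupp.single 0 1 + v) '' BsetAux fuel (sortDesc (k :: ks))

/-- The set of monomials `B(k_1,…,k_N)` (the list is the nonincreasing list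
`[k_N,…,k_1]`). -/
noncomputable def Bset (l : List ℕ) : Set (ℕ →₀ ℕ) :=
  BsetAux (l.sum + l.length) l

lemma sortDesc_sum (l : List ℕ) : (sortDesc l).sum = l.sum :=
  (List.perm_insertionSort _ l).sum_eq

lemma sortDesc_length (l : List ℕ) : (sortDesc l).length = l.length :=
  (List.perm_insertionSort _ l).length_eq

lemma BsetAux_congr : ∀ f1 f2 (l : List ℕ), l.sum + l.length ≤ f1 →
    l.sum + l.length ≤ f2 → BsetAux f1 l = BsetAux f2 l := by
  intro f1
  induction f1 with
  | zero =>
    intro f2 l h1 h2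
    have : l = [] := by
      cases l with
      | nil => rfl
      | cons a t => simp [List.sum_cons] at h1
    subst this
    cases f2 <;> rfl
  | succ f ih =>
    intro f2 l h1 h2
    cases l with
    | nil => cases f2 <;> rfl
    | cons a ks =>
      cases f2 with
      | zero => simp at h2
      | succ g =>
        simp only [List.sum_cons, List.length_cons] at h1 h2
        cases a with
        | zero =>
          show BsetAux f ks = BsetAux g ks
          exact ih g ks (by omega) (by omega)
        | succ a =>
          show shMon '' BsetAux f ks ∪ _ '' BsetAux f (sortDesc (a :: ks)) =
            shMon '' BsetAux g ks ∪ _ '' BsetAux g (sortDesc (a :: ks))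
          rw [ih g ks (by omega) (by omega),
            ih g (sortDesc (a :: ks)) ?_ ?_] <;>
            simp only [sortDesc_sum, sortDesc_length, List.sum_cons, List.length_cons] <;> omega

lemma BsetAux_eq_Bset (fuel : ℕ) (l : List ℕ) (h : l.sum + l.length ≤ fuel) :
    BsetAux fuel l = Bset l :=
  BsetAux_congr fuel _ l h le_rfl

lemma Bset_nil : Bset [] = {0} := rfl

lemma Bset_cons_zero (ks : List ℕ) : Bset (0 :: ks) = Bset ks := by
  show BsetAux ((0 :: ks).sum + (0 :: ks).length) (0 :: ks) = _
  have : (0 :: ks).sum + (0 :: ks).length = (ks.sum + ks.length) + 1 := by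
    simp [List.sum_cons]; omega
  rw [this]
  show BsetAux (ks.sum + ks.length) ks = _
  rfl

lemma Bset_cons_succ (a : ℕ) (ks : List ℕ) :
    Bset ((a + 1) :: ks) = shMon '' Bset ks ∪
      (fun v => Finsupp.single 0 1 + v) '' Bset (sortDesc (a :: ks)) := by
  show BsetAux (((a+1) :: ks).sum + ((a+1) :: ks).length) ((a+1) :: ks) = _
  have : ((a+1) :: ks).sum + ((a+1) :: ks).length = (ks.sum + a + ks.length + 1) + 1 := by
    simp [List.sum_cons]; omega
  rw [this]
  show shMon '' BsetAux _ ks ∪ _ '' BsetAux _ (sortDesc (a :: ks)) = _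
  rw [BsetAux_eq_Bset _ ks (by omega),
    BsetAux_eq_Bset _ (sortDesc (a :: ks)) (by
      simp only [sortDesc_sum, sortDesc_length, List.sum_cons, List.length_cons]; omega)]

noncomputable def f0p (n : ℕ) : (ℕ →₀ ℕ) → (ℕ →₀ ℕ) := fun v => Finsupp.single 0 n + v

lemma f0p_zero_image (S : Set (ℕ →₀ ℕ)) : f0p 0 '' S = S := by
  unfold f0p; simp [Finsupp.single_zero]

lemma f0p_comp_image (a b : ℕ) (S : Set (ℕ →₀ ℕ)) :
    f0p a '' (f0p b '' S) = f0p (a + b) '' S := by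
  rw [Set.image_image]
  funext v
  unfold f0p; simp [Finsupp.single_add, add_assoc]


lemma orderedInsert_repl (s m : ℕ) :
    (List.replicate m s).orderedInsert (fun a b => b ≤ a) s = List.replicate (m + 1) s := by
  cases m with
  | zero => rfl
  | succ m => simp [List.orderedInsert, List.replicate_succ]

lemma orderedInsert_repl2 (s j m : ℕ) :
    (List.replicate j (s+1) ++ List.replicate m s).orderedInsert (fun a b => b ≤ a) s =
      List.replicate j (s+1) ++ List.replicate (m + 1) s := by
  induction j with
  | zero => simpa using orderedInsert_repl s m
  | succ j ih =>
    simp only [List.replicate_succ, List.cons_append, List.orderedInsert]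
    rw [if_neg (by omega), ih]
    simp [List.replicate_succ]

lemma sorted_repl2 (s j m : ℕ) :
    List.Pairwise (fun a b => b ≤ a) (List.replicate j (s+1) ++ List.replicate m s) := by
  rw [List.pairwise_append]
  refine ⟨List.pairwise_replicate.2 (Or.inr le_rfl),
    List.pairwise_replicate.2 (Or.inr le_rfl), ?_⟩
  intro a ha b hb
  rw [List.eq_of_mem_replicate ha, List.eq_of_mem_replicate hb]
  omega

lemma sortDesc_step (s j m : ℕ) :
    sortDesc (s :: (List.replicate j (s+1) ++ List.replicate m s)) =
      List.replicate j (s+1) ++ List.replicate (m + 1) s := by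
  show List.insertionSort _ (s :: _) = _
  rw [List.insertionSort_cons]
  rw [(sorted_repl2 s j m).insertionSort_eq, orderedInsert_repl2]

lemma Bset_step (s j m : ℕ) :
    Bset (List.replicate (j+1) (s+1) ++ List.replicate m s) =
      shMon '' Bset (List.replicate j (s+1) ++ List.replicate m s) ∪
        f0p 1 ''
          Bset (List.replicate j (s+1) ++ List.replicate (m+1) s) := by
  rw [List.replicate_succ, List.cons_append, Bset_cons_succ, sortDesc_step]
  rfl

lemma Bset_chain (s : ℕ) : ∀ j m : ℕ,
    Bset (List.replicate j (s+1) ++ List.replicate m s) =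
      (⋃ i ∈ Finset.range j, f0p (j - 1 - i) ''
        (shMon '' Bset (List.replicate i (s+1) ++ List.replicate (m + (j - 1 - i)) s))) ∪
      f0p j '' Bset (List.replicate (m + j) s) := by
  intro j
  induction j with
  | zero =>
    intro m
    simp [f0p_zero_image]
  | succ j ih =>
    intro m
    rw [Bset_step s j m, ih (m+1), Set.image_union, Set.image_iUnion₂]
    rw [Finset.range_add_one, Finset.set_biUnion_insert]
    have h1 : f0p (j + 1 - 1 - j) ''
        (shMon '' Bset (List.replicate j (s+1) ++ List.replicate (m + (j + 1 - 1 - j)) s)) =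
        shMon '' Bset (List.replicate j (s+1) ++ List.replicate m s) := by
      have : j + 1 - 1 - j = 0 := by omega
      simp [this, f0p_zero_image]
    have h2 : (⋃ i ∈ Finset.range j, f0p 1 '' (f0p (j - 1 - i) ''
        (shMon '' Bset (List.replicate i (s+1) ++ List.replicate (m + 1 + (j - 1 - i)) s)))) =
        ⋃ i ∈ Finset.range j, f0p (j + 1 - 1 - i) ''
          (shMon '' Bset (List.replicate i (s+1) ++ List.replicate (m + (j + 1 - 1 - i)) s)) := by
      apply Set.iUnion₂_congr
      intro i hi
      have hij : i < j := Finset.mem_range.1 hi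
      rw [f0p_comp_image]
      have e1 : 1 + (j - 1 - i) = j + 1 - 1 - i := by omega
      have e2 : m + 1 + (j - 1 - i) = m + (j + 1 - 1 - i) := by omega
      rw [e1, e2]
    have h3 : f0p 1 '' (f0p j '' Bset (List.replicate (m + 1 + j) s)) =
        f0p (j + 1) '' Bset (List.replicate (m + (j + 1)) s) := by
      rw [f0p_comp_image]
      have : m + 1 + j = m + (j + 1) := by omega
      rw [add_comm 1 j, this]
    rw [h2, h3, h1]
    rw [Set.union_assoc, Set.union_comm (shMon '' _)]

lemma Bset_repl_zero (m : ℕ) : Bset (List.replicate m 0) = {0} := by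
  induction m with
  | zero => rfl
  | succ m ih => rw [List.replicate_succ, Bset_cons_zero, ih]

lemma shMon_zero : shMon 0 = 0 := Finsupp.mapDomain_zero

section unions
variable {α : Type*}

lemma bU_range_shift (G : ℕ → Set α) (k : ℕ) :
    ⋃ r ∈ Finset.range k, G (r+1) = ⋃ r ∈ Finset.Icc 1 k, G r := by
  ext v
  simp only [Set.mem_iUnion, Finset.mem_range, Finset.mem_Icc, exists_prop]
  constructor
  · rintro ⟨r, hr, h⟩; exact ⟨r+1, by omega, h⟩
  · rintro ⟨r, hr, h⟩
    refine ⟨r-1, by omega, ?_⟩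
    have e : r - 1 + 1 = r := by omega
    rw [e]; exact h

lemma bU_range_split (G : ℕ → Set α) (k : ℕ) :
    ⋃ r ∈ Finset.range (k+1), G r = G 0 ∪ ⋃ r ∈ Finset.Icc 1 k, G r := by
  ext v
  simp only [Set.mem_union, Set.mem_iUnion, Finset.mem_range, Finset.mem_Icc, exists_prop]
  constructor
  · rintro ⟨r, hr, h⟩
    rcases Nat.eq_zero_or_pos r with h0 | h0
    · subst h0; exact Or.inl h
    · exact Or.inr ⟨r, by omega, h⟩
  · rintro (h | ⟨r, hr, h⟩)
    · exact ⟨0, by omega, h⟩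
    · exact ⟨r, by omega, h⟩

lemma bU_Icc_split (H : ℕ → Set α) (k : ℕ) :
    ⋃ r ∈ Finset.Icc 1 (k+1), H r = H 1 ∪ ⋃ r ∈ Finset.Icc 2 (k+1), H r := by
  ext v
  simp only [Set.mem_union, Set.mem_iUnion, Finset.mem_Icc, exists_prop]
  constructor
  · rintro ⟨r, hr, h⟩
    rcases Nat.eq_or_lt_of_le hr.1 with h1 | h1
    · exact Or.inl (by rw [← h1] at h; exact h)
    · exact Or.inr ⟨r, by omega, h⟩
  · rintro (h | ⟨r, hr, h⟩)
    · exact ⟨1, by omega, h⟩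
    · exact ⟨r, by omega, h⟩

lemma bU_Icc_shift (H : ℕ → Set α) (k : ℕ) :
    ⋃ r ∈ Finset.Icc 1 k, H (r+1) = ⋃ r ∈ Finset.Icc 2 (k+1), H r := by
  ext v
  simp only [Set.mem_iUnion, Finset.mem_Icc, exists_prop]
  constructor
  · rintro ⟨r, hr, h⟩; exact ⟨r+1, by omega, h⟩
  · rintro ⟨r, hr, h⟩
    refine ⟨r-1, by omega, ?_⟩
    have e : r - 1 + 1 = r := by omega
    rw [e]; exact h

end unions

lemma main_aux (n : ℕ) : ∀ k : ℕ, Bset (List.replicate (n+1) k) =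
    (⋃ r ∈ Finset.range (k+1), f0p ((n+1)*r) '' (shMon '' Bset (List.replicate n (k-r)))) ∪
    ⋃ j ∈ Finset.Icc 1 n, ⋃ r ∈ Finset.Icc 1 k, f0p ((n+1)*r - j) ''
      (shMon '' Bset (List.replicate (j-1) (k-r+1) ++ List.replicate (n+1-j) (k-r))) := by
  intro k
  induction k with
  | zero =>
    have h0 : Finset.Icc 1 0 = (∅ : Finset ℕ) := Finset.Icc_eq_empty (by omega)
    rw [Bset_repl_zero]
    simp [h0, Bset_repl_zero, shMon_zero, f0p, Finsupp.single_zero]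
  | succ k ih =>
    have hc := Bset_chain k (n+1) 0
    simp only [List.replicate_zero, List.append_nil, Nat.zero_add, Nat.add_sub_cancel] at hc
    rw [Finset.range_add_one, Finset.set_biUnion_insert] at hc
    simp only [Nat.sub_self, List.replicate_zero, List.append_nil, f0p_zero_image] at hc
    have hQ : (⋃ i ∈ Finset.range n, f0p (n-i) ''
        (shMon '' Bset (List.replicate i (k+1) ++ List.replicate (n-i) k))) =
        ⋃ j ∈ Finset.Icc 1 n, f0p (n+1-j) ''
          (shMon '' Bset (List.replicate (j-1) (k+1) ++ List.replicate (n+1-j) k)) := by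
      rw [← bU_range_shift (fun j => f0p (n+1-j) ''
        (shMon '' Bset (List.replicate (j-1) (k+1) ++ List.replicate (n+1-j) k))) n]
      apply Set.iUnion₂_congr
      intro i hi
      simp only [Nat.succ_sub_succ, Nat.sub_zero, Nat.add_sub_cancel]
    have hT1 : f0p (n+1) '' (⋃ r ∈ Finset.range (k+1), f0p ((n+1)*r) ''
        (shMon '' Bset (List.replicate n (k-r)))) =
        ⋃ r ∈ Finset.Icc 1 (k+1), f0p ((n+1)*r) '' (shMon '' Bset (List.replicate n (k+1-r))) := by
      rw [Set.image_iUnion₂,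
        ← bU_range_shift (fun r => f0p ((n+1)*r) '' (shMon '' Bset (List.replicate n (k+1-r)))) (k+1)]
      apply Set.iUnion₂_congr
      intro r hr
      rw [f0p_comp_image]
      have e : (n+1) + (n+1)*r = (n+1)*(r+1) := by ring
      rw [e]
      simp only [Nat.succ_sub_succ, Nat.sub_zero]
    have hT2 : f0p (n+1) '' (⋃ j ∈ Finset.Icc 1 n, ⋃ r ∈ Finset.Icc 1 k, f0p ((n+1)*r - j) ''
        (shMon '' Bset (List.replicate (j-1) (k-r+1) ++ List.replicate (n+1-j) (k-r)))) =
        ⋃ j ∈ Finset.Icc 1 n, ⋃ r ∈ Finset.Icc 2 (k+1), f0p ((n+1)*r - j) ''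
          (shMon '' Bset (List.replicate (j-1) (k+1-r+1) ++ List.replicate (n+1-j) (k+1-r))) := by
      simp only [Set.image_iUnion]
      apply Set.iUnion₂_congr
      intro j hj
      rw [← bU_Icc_shift (fun r => f0p ((n+1)*r - j) ''
        (shMon '' Bset (List.replicate (j-1) (k+1-r+1) ++ List.replicate (n+1-j) (k+1-r)))) k]
      apply Set.iUnion₂_congr
      intro r hr
      rw [f0p_comp_image]
      have hjn : j ≤ n := (Finset.mem_Icc.1 hj).2
      have hr1 : 1 ≤ r := (Finset.mem_Icc.1 hr).1
      have hle : j ≤ (n+1)*r :=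
        le_trans (by omega) (Nat.le_mul_of_pos_right (n+1) (by omega))
      have e : (n+1) + ((n+1)*r - j) = (n+1)*(r+1) - j := by
        rw [← Nat.add_sub_assoc hle]
        congr 1
        ring
      rw [e]
      simp only [Nat.succ_sub_succ, Nat.sub_zero]
    have hU1 : (⋃ r ∈ Finset.range (k+1+1), f0p ((n+1)*r) ''
        (shMon '' Bset (List.replicate n (k+1-r)))) =
        (shMon '' Bset (List.replicate n (k+1))) ∪
          ⋃ r ∈ Finset.Icc 1 (k+1), f0p ((n+1)*r) '' (shMon '' Bset (List.replicate n (k+1-r))) := by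
      rw [bU_range_split]
      congr 1
      simp [f0p_zero_image]
    have hU2 : (⋃ j ∈ Finset.Icc 1 n, ⋃ r ∈ Finset.Icc 1 (k+1), f0p ((n+1)*r - j) ''
        (shMon '' Bset (List.replicate (j-1) (k+1-r+1) ++ List.replicate (n+1-j) (k+1-r)))) =
        (⋃ j ∈ Finset.Icc 1 n, f0p (n+1-j) ''
          (shMon '' Bset (List.replicate (j-1) (k+1) ++ List.replicate (n+1-j) k))) ∪
        ⋃ j ∈ Finset.Icc 1 n, ⋃ r ∈ Finset.Icc 2 (k+1), f0p ((n+1)*r - j) ''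
          (shMon '' Bset (List.replicate (j-1) (k+1-r+1) ++ List.replicate (n+1-j) (k+1-r))) := by
      have step : (⋃ j ∈ Finset.Icc 1 n, ⋃ r ∈ Finset.Icc 1 (k+1), f0p ((n+1)*r - j) ''
          (shMon '' Bset (List.replicate (j-1) (k+1-r+1) ++ List.replicate (n+1-j) (k+1-r)))) =
          ⋃ j ∈ Finset.Icc 1 n, ((f0p ((n+1)*1 - j) ''
            (shMon '' Bset (List.replicate (j-1) (k+1-1+1) ++ List.replicate (n+1-j) (k+1-1)))) ∪
            ⋃ r ∈ Finset.Icc 2 (k+1), f0p ((n+1)*r - j) ''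
              (shMon '' Bset (List.replicate (j-1) (k+1-r+1) ++ List.replicate (n+1-j) (k+1-r)))) := by
        apply Set.iUnion₂_congr
        intro j hj
        exact bU_Icc_split (fun r => f0p ((n+1)*r - j) ''
          (shMon '' Bset (List.replicate (j-1) (k+1-r+1) ++ List.replicate (n+1-j) (k+1-r)))) k
      rw [step]
      simp only [Set.iUnion_union_distrib]
      congr 1
      apply Set.iUnion₂_congr
      intro j hj
      simp only [mul_one, Nat.add_sub_cancel]
    rw [hc, ih, Set.image_union, hT1, hT2, hQ, hU1, hU2]
    ext v
    simp only [Set.mem_union]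
    tauto

/-- Lemma 4.7:
`B(k^N) = ⋃_{r=0}^{k} f_0^{Nr}·sh(B((k−r)^{N−1}))
  ∪ ⋃_{j=1}^{N−1} ⋃_{r=1}^{k} f_0^{Nr−j}·sh(B((k−r)^{N−j},(k−r+1)^{j−1}))`. -/
theorem Bset_recursion (k N : ℕ) (hk : 1 ≤ k) (hN : 1 ≤ N) :
    Bset (List.replicate N k) =
      (⋃ r ∈ Finset.range (k + 1),
        (fun v => Finsupp.single 0 (N * r) + v) ''
          (shMon '' Bset (List.replicate (N - 1) (k - r)))) ∪
      ⋃ j ∈ Finset.Icc 1 (N - 1), ⋃ r ∈ Finset.Icc 1 k,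
        (fun v => Finsupp.single 0 (N * r - j) + v) ''
          (shMon ''
            Bset (List.replicate (j - 1) (k - r + 1) ++ List.replicate (N - j) (k - r))) := by
  obtain ⟨n, rfl⟩ : ∃ n, N = n + 1 := ⟨N - 1, by omega⟩
  have hf : ∀ e : ℕ, (fun v => Finsupp.single 0 e + v) = f0p e := fun _ => rfl
  simp only [hf, Nat.add_sub_cancel]
  exact main_aux n k
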